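/- Let G = (V,E) be a finite directed graph with n vertices, let B ⊆ V be a split of G of size k, let A be an alphabet of size s, and let (g_j)_{j∈V} be functions g_j : A^{N⁻(j)} → A. Then the following are equivalent: (i) with x uniform on A^V, the probability that all players guess correctly (g_j((x_i)_{i∈N⁻(j)}) = x_j for every j ∈ V) is at least (1/s)^{n−k}; (ii) for every x ∈ A^V, if x_j = g_j((x_i)_{i∈N⁻(j)}) for all j ∈ V∖B, then also x_b = g_b((x_i)_{i∈N⁻(b)}) for all b ∈ B (i.e., the functions g_j, with arguments reordered according to the split, solve the split network N_G). -/

import Mathlib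

open Finset

/-! ## Basic setup: directed graphs, guessing games, entropy (Riis, "Graph Entropy,
Network Coding and Guessing games"). -/

/-- The set `N⁻(j)` of in-neighbours of a vertex `j` in the directed graph given by
the edge relation `E` (an edge `(i,j)` is `E i j`). -/
def inNbr {V : Type*} [Fintype V] (E : V → V → Prop) [DecidableRel E] (j : V) : Finset V :=
  Finset.univ.filter (fun i => E i j)

/-- `p` is a probability distribution on `V → A`. -/
def IsProbDist {V A : Type*} [Fintype V] [DecidableEq V] [Fintype A] (p : (V → A) → ℝ) : Prop :=
  (∀ x, 0 ≤ p x) ∧ ∑ x : V → A, p x = 1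

/-- The marginal probability, under `p`, that the coordinates in `S` agree with `y`. -/
noncomputable def marginalPMF {V A : Type*} [Fintype V] [DecidableEq V] [Fintype A] [DecidableEq A]
    (p : (V → A) → ℝ) (S : Finset V) (y : ↥S → A) : ℝ :=
  ∑ x : V → A, if ∀ i : ↥S, x i.1 = y i then p x else 0

/-- `Hent s p S` : the base-`s` Shannon entropy of the marginal of `p` on the
coordinates in `S` (using `Real.negMulLog`, so the convention `0·log(1/0) = 0` holds). -/
noncomputable def Hent {V A : Type*} [Fintype V] [DecidableEq V] [Fintype A] [DecidableEq A]
    (s : ℕ) (p : (V → A) → ℝ) (S : Finset V) : ℝ :=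
  (∑ y : ↥S → A, Real.negMulLog (marginalPMF p S y)) / Real.log s

/-- `p` satisfies the information constraints of the graph: `H(j | N⁻(j)) = 0` for every
vertex `j`, where `H(X | Y) = H(X ∪ Y) − H(Y)`. -/
def InfoConstraints {V A : Type*} [Fintype V] [DecidableEq V] [Fintype A] [DecidableEq A]
    (E : V → V → Prop) [DecidableRel E] (s : ℕ) (p : (V → A) → ℝ) : Prop :=
  ∀ j : V, Hent s p (insert j (inNbr E j)) - Hent s p (inNbr E j) = 0

/-- The (private) entropy `E(G,s)` of the graph over an alphabet of size `s`:
the sup of `H_p(V)` over probability distributions on `A^V` (`A = Fin s`)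
satisfying the information constraints of the graph. -/
noncomputable def graphEntropy {V : Type*} [Fintype V] [DecidableEq V]
    (E : V → V → Prop) [DecidableRel E] (s : ℕ) : ℝ :=
  sSup {h : ℝ | ∃ p : (V → Fin s) → ℝ,
    IsProbDist p ∧ InfoConstraints E s p ∧ h = Hent s p Finset.univ}

/-- The general entropy `E(G) = sup_{s ≥ 2} E(G,s)`. -/
noncomputable def genEntropy {V : Type*} [Fintype V] [DecidableEq V]
    (E : V → V → Prop) [DecidableRel E] : ℝ :=
  sSup {h : ℝ | ∃ s : ℕ, 2 ≤ s ∧ h = graphEntropy E s}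

/-- A guessing strategy: each vertex `j` guesses a value `g j x` which may only depend on
the values `x i` for in-neighbours `i` of `j`. -/
def IsStrategy {V A : Type*} (E : V → V → Prop) (g : V → (V → A) → A) : Prop :=
  ∀ j x y, (∀ i, E i j → x i = y i) → g j x = g j y

/-- The set of assignments at which all players guess correctly. -/
def correctSet {V A : Type*} [Fintype V] [DecidableEq V] [Fintype A] [DecidableEq A]
    (g : V → (V → A) → A) : Finset (V → A) :=
  Finset.univ.filter (fun x => ∀ j, g j x = x j)

/-- The maximal number of assignments at which all players guess correctly,
over all guessing strategies (over the alphabet `Fin s`). -/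
noncomputable def maxCorrect {V : Type*} [Fintype V] [DecidableEq V]
    (E : V → V → Prop) [DecidableRel E] (s : ℕ) : ℕ :=
  sSup {m : ℕ | ∃ g : V → (V → Fin s) → Fin s, IsStrategy E g ∧ m = (correctSet g).card}

/-- The maximal probability (with `x` uniform on `A^V`) that all players guess correctly. -/
noncomputable def maxProb {V : Type*} [Fintype V] [DecidableEq V]
    (E : V → V → Prop) [DecidableRel E] (s : ℕ) : ℝ :=
  (maxCorrect E s : ℝ) / (s : ℝ) ^ Fintype.card V

/-- The guessing number `g(G,s)`: the unique `α` with maximal success probability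
`(1/s)^(n−α)`, i.e. `α = n + log_s (maximal probability)`. -/
noncomputable def guessingNumber {V : Type*} [Fintype V] [DecidableEq V]
    (E : V → V → Prop) [DecidableRel E] (s : ℕ) : ℝ :=
  (Fintype.card V : ℝ) + Real.logb s (maxProb E s)

/-- The general guessing number `g(G) = sup_{s ≥ 2} g(G,s)`. -/
noncomputable def genGuessing {V : Type*} [Fintype V] [DecidableEq V]
    (E : V → V → Prop) [DecidableRel E] : ℝ :=
  sSup {h : ℝ | ∃ s : ℕ, 2 ≤ s ∧ h = guessingNumber E s}

/-! ## Entropy-like functions -/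

/-- An S-entropy-like function: `f ∅ = 0`, monotone and submodular (the polymatroidal
axioms, equivalently Shannon's information inequalities). -/
def SEntLike {U : Type*} [DecidableEq U] (f : Finset U → ℝ) : Prop :=
  f ∅ = 0 ∧ (∀ X Y, X ⊆ Y → f X ≤ f Y) ∧ ∀ X Y, f (X ∩ Y) + f (X ∪ Y) ≤ f X + f Y

/-- Mutual information `I_f(X;Y|Z)` of an entropy-like function. -/
def mutI {U : Type*} [DecidableEq U] (f : Finset U → ℝ) (X Y Z : Finset U) : ℝ :=
  f (X ∪ Z) + f (Y ∪ Z) - f (X ∪ Y ∪ Z) - f Z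

/-- A Zhang–Yeung entropy-like function: S-entropy-like and satisfying the ZY
non-Shannon information inequality for all `A B C D`. -/
def ZYEntLike {U : Type*} [DecidableEq U] (f : Finset U → ℝ) : Prop :=
  SEntLike f ∧ ∀ A B C D : Finset U,
    2 * mutI f C D ∅ ≤ mutI f A B ∅ + mutI f A (C ∪ D) ∅ + 3 * mutI f C D A + mutI f C D B

/-- `f` satisfies the information constraints of the graph:
`f(N⁻(j) ∪ {j}) = f(N⁻(j))` for every vertex `j`. -/
def FConstraints {V : Type*} [Fintype V] [DecidableEq V]
    (E : V → V → Prop) [DecidableRel E] (f : Finset V → ℝ) : Prop :=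
  ∀ j : V, f (insert j (inNbr E j)) = f (inNbr E j)

/-- The S-entropy `E_S(G)`: the maximal value of `f(V)` over normalized S-entropy-like
functions satisfying the information constraints of `G`. -/
noncomputable def SEnt {V : Type*} [Fintype V] [DecidableEq V]
    (E : V → V → Prop) [DecidableRel E] : ℝ :=
  sSup {h : ℝ | ∃ f : Finset V → ℝ,
    SEntLike f ∧ (∀ j : V, f {j} ≤ 1) ∧ FConstraints E f ∧ h = f Finset.univ}

/-- The ZY-entropy `E_ZY(G)`. -/
noncomputable def ZYEnt {V : Type*} [Fintype V] [DecidableEq V]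
    (E : V → V → Prop) [DecidableRel E] : ℝ :=
  sSup {h : ℝ | ∃ f : Finset V → ℝ,
    ZYEntLike f ∧ (∀ j : V, f {j} ≤ 1) ∧ FConstraints E f ∧ h = f Finset.univ}

/-! ## Acyclicity -/

/-- The subgraph induced on `S` is acyclic: no directed cycle within `S`. -/
def AcyclicOn {V : Type*} (E : V → V → Prop) (S : Finset V) : Prop :=
  ∀ v ∈ S, ¬ Relation.TransGen (fun a b => a ∈ S ∧ b ∈ S ∧ E a b) v v

/-- The acyclic independence number: the maximal size of a vertex set inducing an
acyclic subgraph. -/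
noncomputable def acycIndepNum {V : Type*} [Fintype V] (E : V → V → Prop) : ℕ :=
  sSup {k : ℕ | ∃ S : Finset V, AcyclicOn E S ∧ k = S.card}

/-! ## Index codes -/

/-- An index code protocol: a broadcast map `Φ` together with decoding functions `d j`
(depending only on the in-neighbour values and the broadcast message) recovering `x j`. -/
def IsIndexCode {V A W : Type*} (E : V → V → Prop)
    (Φ : (V → A) → W) (d : V → (V → A) → W → A) : Prop :=
  (∀ (j : V) (x y : V → A) (w : W), (∀ i, E i j → x i = y i) → d j x w = d j y w) ∧
  ∀ (x : V → A) (j : V), d j x (Φ x) = x j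

/-- The length `log_s |Φ(A^V)|` of an index code protocol. -/
noncomputable def protocolLength {V A W : Type*} [Fintype V] [DecidableEq V] [Fintype A]
    [Fintype W] [DecidableEq W] (s : ℕ) (Φ : (V → A) → W) : ℝ :=
  Real.logb s ((Finset.univ.image Φ).card)

/-- The base-`s` entropy of the broadcast message `Φ(x)` for `x` uniform on `A^V`. -/
noncomputable def protocolEntropy {V A W : Type*} [Fintype V] [DecidableEq V] [Fintype A]
    [DecidableEq A] [Fintype W] [DecidableEq W] (s : ℕ) (Φ : (V → A) → W) : ℝ :=
  (∑ w : W, Real.negMulLog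
    (((Finset.univ.filter (fun x : V → A => Φ x = w)).card : ℝ) / (s : ℝ) ^ Fintype.card V))
    / Real.log s

/-- `i(G,s)`: the minimal length of an index code for `G` over `Fin s`. -/
noncomputable def indexCodeLen {V : Type*} [Fintype V] [DecidableEq V]
    (E : V → V → Prop) [DecidableRel E] (s : ℕ) : ℝ :=
  sInf {h : ℝ | ∃ (W : Type) (iW : Fintype W) (dW : DecidableEq W)
    (Φ : (V → Fin s) → W) (d : V → (V → Fin s) → W → Fin s),
    IsIndexCode E Φ d ∧ h = @protocolLength V (Fin s) W _ _ _ iW dW s Φ}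

/-- `i_entro(G,s)`: the minimal entropy of an index code for `G` over `Fin s`. -/
noncomputable def indexCodeEntro {V : Type*} [Fintype V] [DecidableEq V]
    (E : V → V → Prop) [DecidableRel E] (s : ℕ) : ℝ :=
  sInf {h : ℝ | ∃ (W : Type) (iW : Fintype W) (dW : DecidableEq W)
    (Φ : (V → Fin s) → W) (d : V → (V → Fin s) → W → Fin s),
    IsIndexCode E Φ d ∧ h = @protocolEntropy V (Fin s) W _ _ _ _ iW dW s Φ}

/-- The information constraints on `V ∪ {w}` (`w = none`) used to define the S/ZY-minimal
index code: `f(N⁻(j) ∪ {w} ∪ {j}) = f(N⁻(j) ∪ {w})` for each `j`, `f(V ∪ {w}) = f(V)`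
and `f(V) = n`. -/
def WConstraints {V : Type*} [Fintype V] [DecidableEq V]
    (E : V → V → Prop) [DecidableRel E] (f : Finset (Option V) → ℝ) : Prop :=
  (∀ j : V, f (insert (some j) (insert none ((inNbr E j).image some)))
      = f (insert none ((inNbr E j).image some))) ∧
  f (insert none ((Finset.univ : Finset V).image some))
      = f ((Finset.univ : Finset V).image some) ∧
  f ((Finset.univ : Finset V).image some) = (Fintype.card V : ℝ)

/-- The S-minimal index code `i_S(G)`. -/
noncomputable def iS {V : Type*} [Fintype V] [DecidableEq V]
    (E : V → V → Prop) [DecidableRel E] : ℝ :=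
  sInf {h : ℝ | ∃ f : Finset (Option V) → ℝ,
    SEntLike f ∧ (∀ j : V, f {some j} ≤ 1) ∧ WConstraints E f ∧ h = f {none}}

/-- The ZY-minimal index code `i_ZY(G)`. -/
noncomputable def iZY {V : Type*} [Fintype V] [DecidableEq V]
    (E : V → V → Prop) [DecidableRel E] : ℝ :=
  sInf {h : ℝ | ∃ f : Finset (Option V) → ℝ,
    ZYEntLike f ∧ (∀ j : V, f {some j} ≤ 1) ∧ WConstraints E f ∧ h = f {none}}

/-! ## The bidirected pentagon `C5` -/

/-- The pentagon with bidirected edges: vertices `Fin 5`, edges between cyclically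
adjacent vertices. -/
def E5 : Fin 5 → Fin 5 → Prop := fun i j => (i.1 + 1) % 5 = j.1 ∨ (j.1 + 1) % 5 = i.1

instance : DecidableRel E5 := fun i j => by unfold E5; infer_instance

section SplitAux
variable {V : Type} [Fintype V] [DecidableEq V] (E : V → V → Prop) [DecidableRel E]
  (B : Finset V) {s : ℕ}

private def rrel : V → V → Prop :=
  fun a b => a ∈ Finset.univ \ B ∧ b ∈ Finset.univ \ B ∧ E a b

set_option linter.unusedSectionVars false in
lemma rrel_wf (hB : AcyclicOn E (Finset.univ \ B)) :
    WellFounded (Relation.TransGen (rrel E B)) := by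
  have hirr : ∀ v, ¬ Relation.TransGen (rrel E B) v v := by
    intro v hv
    have hvS : v ∈ Finset.univ \ B := by
      cases hv with
      | single h => exact h.1
      | tail h1 h2 => exact h2.2.1
    exact hB v hvS hv
  have : IsIrrefl V (Relation.TransGen (rrel E B)) := ⟨hirr⟩
  exact Finite.wellFounded_of_trans_of_irrefl _

lemma existsUnique_ext (hB : AcyclicOn E (Finset.univ \ B)) (hs : 0 < s)
    (g : V → (V → Fin s) → Fin s) (hg : IsStrategy E g) (y : ↥B → Fin s) :
    ∃! x : V → Fin s, (∀ b : ↥B, x b.1 = y b) ∧ ∀ j ∉ B, x j = g j x := by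
  classical
  have wf := rrel_wf E B hB
  set F : ∀ j : V, (∀ i, Relation.TransGen (rrel E B) i j → Fin s) → Fin s :=
    fun j ih => if h : j ∈ B then y ⟨j, h⟩ else
      g j (fun i => if h2 : i ∈ B then y ⟨i, h2⟩ else
        if hi : Relation.TransGen (rrel E B) i j then ih i hi else ⟨0, hs⟩) with hF
  set x : V → Fin s := wf.fix F with hx
  have hxB : ∀ (i : V) (h : i ∈ B), x i = y ⟨i, h⟩ := by
    intro i h
    rw [hx, WellFounded.fix_eq, hF]
    simp [h]
  have key : ∀ j ∉ B, x j = g j x := by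
    intro j hj
    conv_lhs => rw [hx, WellFounded.fix_eq]
    rw [hF]
    simp only [hj, dif_neg, not_false_iff]
    apply hg
    intro i hEi
    by_cases h2 : i ∈ B
    · simp [h2, hxB i h2]
    · have hr : Relation.TransGen (rrel E B) i j :=
        Relation.TransGen.single ⟨by simp [h2], by simp [hj], hEi⟩
      simp [h2, hr, hx]
      rfl
  refine ⟨x, ⟨fun b => hxB b.1 b.2, key⟩, ?_⟩
  rintro z ⟨hzB, hz⟩
  funext j
  induction j using WellFounded.induction wf with
  | _ j ih =>
    by_cases h : j ∈ B
    · rw [hzB ⟨j, h⟩, hxB j h]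
    · rw [hz j h, key j h]
      apply hg
      intro i hEi
      by_cases h2 : i ∈ B
      · rw [hzB ⟨i, h2⟩, hxB i h2]
      · exact ih i (Relation.TransGen.single ⟨by simp [h2], by simp [h], hEi⟩)

end SplitAux

/-- Let `B` be a split of `G` (i.e. `V ∖ B` induces an acyclic
subgraph) of size `k`, and let `g` be a guessing strategy. Then the probability that all
players guess correctly is at least `(1/s)^(n−k)` iff the functions `g_j` solve the split
network: whenever `x` is consistent with the coding functions at all nodes outside `B`,
every output node `b ∈ B` reproduces `x b`. -/
theorem split_network_solvable_iff_guessing {V : Type} [Fintype V] [DecidableEq V]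
    (E : V → V → Prop) [DecidableRel E] (B : Finset V)
    (hB : AcyclicOn E (Finset.univ \ B)) (s : ℕ) (hs : 2 ≤ s)
    (g : V → (V → Fin s) → Fin s) (hg : IsStrategy E g) :
    (((1 : ℝ) / s) ^ (Fintype.card V - B.card)
        ≤ ((correctSet g).card : ℝ) / (s : ℝ) ^ Fintype.card V)
    ↔ (∀ x : V → Fin s, (∀ j, j ∉ B → x j = g j x) → ∀ b ∈ B, x b = g b x) := by
  classical
  set n := Fintype.card V with hn
  set k := B.card with hkdef
  have hs0 : 0 < s := lt_of_lt_of_le two_pos hs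
  have hk : k ≤ n := by
    rw [hkdef, hn, ← Finset.card_univ]
    exact Finset.card_le_card (Finset.subset_univ B)
  set S : Finset (V → Fin s) := Finset.univ.filter (fun x => ∀ j ∉ B, x j = g j x) with hS
  have hmemS : ∀ x, x ∈ S ↔ ∀ j ∉ B, x j = g j x := by intro x; simp [hS]
  have hmemC : ∀ x, x ∈ correctSet g ↔ ∀ j, g j x = x j := by intro x; simp [correctSet]
  have hCS : correctSet g ⊆ S := fun x hx =>
    (hmemS x).2 (fun j _ => ((hmemC x).1 hx j).symm)
  have hcardS : S.card = s ^ k := by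
    have hb : S.card = (Finset.univ : Finset (↥B → Fin s)).card := by
      apply Finset.card_bij (fun (x : V → Fin s) (_ : x ∈ S) => fun b : ↥B => x b.1)
      · intro _ _; exact Finset.mem_univ _
      · intro x1 hx1 x2 hx2 hEq
        obtain ⟨w, hw, hu⟩ := existsUnique_ext E B hB hs0 g hg (fun b : ↥B => x1 b.1)
        have h1 : x1 = w := hu x1 ⟨fun b => rfl, (hmemS x1).1 hx1⟩
        have h2 : x2 = w := hu x2 ⟨fun b => (congrFun hEq b).symm, (hmemS x2).1 hx2⟩
        rw [h1, h2]
      · intro y _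
        obtain ⟨w, ⟨hwB, hw⟩, _⟩ := existsUnique_ext E B hB hs0 g hg y
        exact ⟨w, (hmemS w).2 hw, funext fun b => hwB b⟩
    rw [hb, Finset.card_univ, Fintype.card_fun, Fintype.card_coe, Fintype.card_fin]
  have hsR : (0 : ℝ) < (s : ℝ) := by exact_mod_cast hs0
  have key : (((1 : ℝ) / s) ^ (n - k) ≤ ((correctSet g).card : ℝ) / (s : ℝ) ^ n)
      ↔ s ^ k ≤ (correctSet g).card := by
    have hEq : ((1 : ℝ) / s) ^ (n - k) = (s : ℝ) ^ k / (s : ℝ) ^ n := by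
      rw [div_pow, one_pow]
      rw [div_eq_div_iff (pow_pos hsR _).ne' (pow_pos hsR _).ne', one_mul, ← pow_add]
      congr 1
      omega
    rw [hEq, div_le_div_iff_of_pos_right (pow_pos hsR n)]
    exact_mod_cast Iff.rfl
  rw [key]
  constructor
  · intro h x hx b hb
    have hC : correctSet g = S :=
      Finset.eq_of_subset_of_card_le hCS (by rw [hcardS]; exact h)
    have hxS : x ∈ S := (hmemS x).2 hx
    rw [← hC] at hxS
    exact ((hmemC x).1 hxS b).symm
  · intro h
    have hSC : S ⊆ correctSet g := by
      intro x hx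
      refine (hmemC x).2 (fun j => ?_)
      by_cases hj : j ∈ B
      · exact (h x ((hmemS x).1 hx) j hj).symm
      · exact ((hmemS x).1 hx j hj).symm
    calc s ^ k = S.card := hcardS.symm
      _ ≤ (correctSet g).card := Finset.card_le_card hSC
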